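/- Let H be a Hilbert space and (π_k)_{k≥n} a decreasing sequence of projections with π_n = e. Let (f_k)_{k≥n} be an increasing sequence of positive operators with f_n = 0, each π_k commuting with π_{k−1} f_k π_{k−1}, and π_k f_k π_k ≤ λ² π_k for all k. Suppose additionally that the increments g_k = f_k − f_{k−1} satisfy ‖g_k‖_∞ ≤ λ². Then for every k ≥ n, ‖π_k f_k π_k + ∑_{j=n+1}^k (π_{j−1} − π_j) f_j (π_{j−1} − π_j)‖_∞ ≤ 3λ². -/
import Mathlib


open ContinuousLinearMap

section AuxLemmas

variable {H : Type*} [NormedAddCommGroup H] [InnerProductSpace ℂ H] [CompleteSpace H]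

private lemma smul_nonneg_op {T : H →L[ℂ] H} (hT : 0 ≤ T) {r : ℝ} (hr : 0 ≤ r) :
    (0 : H →L[ℂ] H) ≤ r • T := by
  have h := star_left_conjugate_nonneg hT (algebraMap ℝ (H →L[ℂ] H) (Real.sqrt r))
  rwa [← algebraMap_star_comm, star_trivial, ← Algebra.smul_def, smul_mul_assoc,
    ← Algebra.commutes, ← Algebra.smul_def, smul_smul, Real.mul_self_sqrt hr] at h

private lemma norm_le_of_nonneg_le {T : H →L[ℂ] H} {r : ℝ} (hr : 0 ≤ r) (h0 : 0 ≤ T)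
    (h1 : T ≤ algebraMap ℝ (H →L[ℂ] H) r) : ‖T‖ ≤ r :=
  (CStarAlgebra.norm_le_iff_le_algebraMap T hr h0).mpr h1

private lemma proj_nonneg {p : H →L[ℂ] H} (h1 : IsIdempotentElem p) (h2 : IsSelfAdjoint p) :
    0 ≤ p := by
  have h : p = star p * p := by rw [h2.star_eq, h1.eq]
  rw [h]; exact star_mul_self_nonneg p

private lemma conj_le_conj_self {q X Y : H →L[ℂ] H} (hq : IsSelfAdjoint q) (h : X ≤ Y) :
    q * X * q ≤ q * Y * q := by
  simpa [hq.star_eq] using star_left_conjugate_le_conjugate h q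

private lemma conj_nonneg_self {q X : H →L[ℂ] H} (hq : IsSelfAdjoint q) (h : 0 ≤ X) :
    0 ≤ q * X * q := by
  simpa [hq.star_eq] using star_left_conjugate_nonneg h q

private lemma proj_absorb {p q : H →L[ℂ] H} (hp1 : IsIdempotentElem p) (hp2 : IsSelfAdjoint p)
    (hq1 : IsIdempotentElem q) (hq2 : IsSelfAdjoint q) (h : q ≤ p) :
    q * p = q ∧ p * q = q := by
  have h0 : (1 - p) * p * (1 - p) = 0 := by
    rw [sub_mul, one_mul, hp1.eq, sub_self, zero_mul]
  have hc : (1 - p) * q * (1 - p) ≤ 0 := by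
    have := star_left_conjugate_le_conjugate h (1 - p)
    rwa [star_sub, star_one, hp2.star_eq, h0] at this
  have key : star (q * (1 - p)) * (q * (1 - p)) = (1 - p) * q * (1 - p) := by
    rw [star_mul, hq2.star_eq, star_sub, star_one, hp2.star_eq, ← mul_assoc,
      mul_assoc (1 - p) q q, hq1.eq]
  have hx : q * (1 - p) = 0 := by
    rw [← CStarRing.star_mul_self_eq_zero_iff]
    exact le_antisymm (key ▸ hc) (star_mul_self_nonneg _)
  have hqp : q * p = q := by
    have h' := hx
    rw [mul_sub, mul_one, sub_eq_zero] at h'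
    exact h'.symm
  refine ⟨hqp, ?_⟩
  calc p * q = star (q * p) := by rw [star_mul, hp2.star_eq, hq2.star_eq]
    _ = q := by rw [hqp, hq2.star_eq]

private lemma sum_teles (π : ℕ → H →L[ℂ] H) (n k : ℕ) (hk : n ≤ k) :
    ∑ j ∈ Finset.Icc (n + 1) k, (π (j - 1) - π j) = π n - π k := by
  induction k, hk using Nat.le_induction with
  | base => rw [Finset.Icc_eq_empty (by omega), Finset.sum_empty, sub_self]
  | succ k hk ih =>
    rw [Finset.sum_Icc_succ_top (by omega), ih]
    simp only [Nat.add_sub_cancel]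
    abel

end AuxLemmas

set_option maxHeartbeats 1000000
set_option synthInstance.maxHeartbeats 200000

/-- Norm bound from Step 1 of the `(p,∞)_c`-atom decomposition, abstracted to a
Hilbert space: if `(π_k)_{k≥n}` are decreasing projections with `π_n = e`,
`(f_k)_{k≥n}` increasing positive operators with `f_n = 0`, each `π_k` commuting
with `π_{k−1} f_k π_{k−1}` and `π_k f_k π_k ≤ λ² π_k`, and the increments
`g_k = f_k − f_{k−1}` satisfy `‖g_k‖ ≤ λ²`, then for every `k ≥ n`,
`‖π_k f_k π_k + ∑_{j=n+1}^k (π_{j−1} − π_j) f_j (π_{j−1} − π_j)‖ ≤ 3λ²`. -/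
theorem truncated_square_function_norm_bound
    {H : Type*} [NormedAddCommGroup H] [InnerProductSpace ℂ H] [CompleteSpace H]
    (n : ℕ) (l : ℝ) (e : H →L[ℂ] H)
    (π f : ℕ → H →L[ℂ] H)
    (hproj : ∀ k ≥ n, IsIdempotentElem (π k) ∧ IsSelfAdjoint (π k))
    (hπn : π n = e)
    (hdec : ∀ k ≥ n, (π k - π (k + 1)).IsPositive)
    (hfn : f n = 0)
    (hfpos : ∀ k ≥ n, (f k).IsPositive)
    (hfmono : ∀ k ≥ n, (f (k + 1) - f k).IsPositive)
    (hcomm : ∀ k > n, Commute (π k) (π (k - 1) * f k * π (k - 1)))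
    (hcuc : ∀ k ≥ n, (l ^ 2 • π k - π k * f k * π k).IsPositive)
    (hinc : ∀ k > n, ‖f k - f (k - 1)‖ ≤ l ^ 2) :
    ∀ k ≥ n,
      ‖π k * f k * π k +
          ∑ j ∈ Finset.Icc (n + 1) k, (π (j - 1) - π j) * f j * (π (j - 1) - π j)‖ ≤
        3 * l ^ 2 := by
  intro k hk
  have hl2 : (0 : ℝ) ≤ l ^ 2 := sq_nonneg l
  set c : H →L[ℂ] H := algebraMap ℝ (H →L[ℂ] H) (l ^ 2) with hc
  have hone : (0 : H →L[ℂ] H) ≤ 1 := by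
    simpa using star_mul_self_nonneg (1 : H →L[ℂ] H)
  have hcompl : ∀ m, n ≤ m → π m ≤ 1 := by
    intro m hm
    have h1 : IsIdempotentElem (1 - π m) := (hproj m hm).1.one_sub
    have h2 : IsSelfAdjoint (1 - π m) :=
      (IsSelfAdjoint.one (H →L[ℂ] H)).sub (hproj m hm).2
    exact sub_nonneg.mp (proj_nonneg h1 h2)
  have hπ0 : ∀ m, n ≤ m → (0 : H →L[ℂ] H) ≤ π m := fun m hm =>
    proj_nonneg (hproj m hm).1 (hproj m hm).2
  have hsmul_le_c : ∀ X : H →L[ℂ] H, X ≤ 1 → l ^ 2 • X ≤ c := by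
    intro X hX
    have h := smul_nonneg_op (sub_nonneg.mpr hX) hl2
    rw [smul_sub] at h
    have h2 := sub_nonneg.mp h
    rw [hc, Algebra.algebraMap_eq_smul_one]
    exact h2
  have hqfacts : ∀ m, n ≤ m →
      (π m - π (m + 1)) * π m = π m - π (m + 1) ∧
      π m * (π m - π (m + 1)) = π m - π (m + 1) ∧
      (π m - π (m + 1)) * (π m - π (m + 1)) = π m - π (m + 1) ∧
      IsSelfAdjoint (π m - π (m + 1)) := by
    intro m hm
    obtain ⟨hp1, hp2⟩ := hproj m hm
    obtain ⟨hr1, hr2⟩ := hproj (m + 1) (by omega)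
    have hle : π (m + 1) ≤ π m := (ContinuousLinearMap.le_def _ _).mpr (hdec m hm)
    obtain ⟨hrp, hpr⟩ := proj_absorb hp1 hp2 hr1 hr2 hle
    have hqp : (π m - π (m + 1)) * π m = π m - π (m + 1) := by
      rw [sub_mul, hp1.eq, hrp]
    have hpq : π m * (π m - π (m + 1)) = π m - π (m + 1) := by
      rw [mul_sub, hp1.eq, hpr]
    have hidem : (π m - π (m + 1)) * (π m - π (m + 1)) = π m - π (m + 1) := by
      rw [sub_mul, hpq, mul_sub, hrp, hr1.eq, sub_self, sub_zero]
    exact ⟨hqp, hpq, hidem, hp2.sub hr2⟩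
  have hsum : ∀ t : ℕ → H →L[ℂ] H,
      (∀ j ∈ Finset.Icc (n + 1) k, 0 ≤ t j ∧ t j ≤ l ^ 2 • (π (j - 1) - π j)) →
      ‖∑ j ∈ Finset.Icc (n + 1) k, t j‖ ≤ l ^ 2 := by
    intro t ht
    have h0 : (0 : H →L[ℂ] H) ≤ ∑ j ∈ Finset.Icc (n + 1) k, t j :=
      Finset.sum_nonneg fun j hj => (ht j hj).1
    have h1 : ∑ j ∈ Finset.Icc (n + 1) k, t j ≤
        ∑ j ∈ Finset.Icc (n + 1) k, l ^ 2 • (π (j - 1) - π j) :=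
      Finset.sum_le_sum fun j hj => (ht j hj).2
    rw [← Finset.smul_sum, sum_teles π n k hk] at h1
    have h2 : l ^ 2 • (π n - π k) ≤ c := by
      apply hsmul_le_c
      have e1 : (0 : H →L[ℂ] H) ≤ 1 - π n := sub_nonneg.mpr (hcompl n le_rfl)
      have e2 := hπ0 k hk
      rw [← sub_nonneg]
      have heq : (1 : H →L[ℂ] H) - (π n - π k) = (1 - π n) + π k := by abel
      rw [heq]
      exact add_nonneg e1 e2
    exact norm_le_of_nonneg_le hl2 h0 (h1.trans h2)
  -- Bound on the first summand π_k f_k π_k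
  have hA0 : 0 ≤ π k * f k * π k :=
    conj_nonneg_self (hproj k hk).2 ((nonneg_iff_isPositive _).mpr (hfpos k hk))
  have hAnorm : ‖π k * f k * π k‖ ≤ l ^ 2 := by
    refine norm_le_of_nonneg_le hl2 hA0 ?_
    have h1 : π k * f k * π k ≤ l ^ 2 • π k :=
      (ContinuousLinearMap.le_def _ _).mpr (hcuc k hk)
    exact h1.trans (hsmul_le_c _ (hcompl k hk))
  -- Termwise bounds for the increment part
  have hS1 : ∀ j ∈ Finset.Icc (n + 1) k,
      0 ≤ (π (j - 1) - π j) * (f j - f (j - 1)) * (π (j - 1) - π j) ∧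
      (π (j - 1) - π j) * (f j - f (j - 1)) * (π (j - 1) - π j) ≤
        l ^ 2 • (π (j - 1) - π j) := by
    intro j hj
    rw [Finset.mem_Icc] at hj
    obtain ⟨m, rfl⟩ : ∃ m, j = m + 1 := ⟨j - 1, by omega⟩
    simp only [Nat.add_sub_cancel]
    have hm : n ≤ m := by omega
    obtain ⟨hqp, hpq, hqq, hqsa⟩ := hqfacts m hm
    have hg0 : (0 : H →L[ℂ] H) ≤ f (m + 1) - f m :=
      (nonneg_iff_isPositive _).mpr (hfmono m hm)
    have hgc : f (m + 1) - f m ≤ c := by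
      refine (IsSelfAdjoint.le_algebraMap_norm_self (IsSelfAdjoint.of_nonneg hg0)).trans ?_
      have hn := hinc (m + 1) (by omega)
      simp only [Nat.add_sub_cancel] at hn
      rw [hc, ← sub_nonneg, ← map_sub, Algebra.algebraMap_eq_smul_one]
      exact smul_nonneg_op hone (by linarith)
    refine ⟨conj_nonneg_self hqsa hg0, ?_⟩
    have h1 := conj_le_conj_self hqsa hgc
    rwa [hc, Algebra.algebraMap_eq_smul_one, mul_smul_comm, mul_one, smul_mul_assoc, hqq] at h1
  -- Termwise bounds for the lagged part
  have hS2 : ∀ j ∈ Finset.Icc (n + 1) k,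
      0 ≤ (π (j - 1) - π j) * f (j - 1) * (π (j - 1) - π j) ∧
      (π (j - 1) - π j) * f (j - 1) * (π (j - 1) - π j) ≤ l ^ 2 • (π (j - 1) - π j) := by
    intro j hj
    rw [Finset.mem_Icc] at hj
    obtain ⟨m, rfl⟩ : ∃ m, j = m + 1 := ⟨j - 1, by omega⟩
    simp only [Nat.add_sub_cancel]
    have hm : n ≤ m := by omega
    obtain ⟨hqp, hpq, hqq, hqsa⟩ := hqfacts m hm
    have hf0 : (0 : H →L[ℂ] H) ≤ f m := (nonneg_iff_isPositive _).mpr (hfpos m hm)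
    have hrw : (π m - π (m + 1)) * f m * (π m - π (m + 1)) =
        (π m - π (m + 1)) * (π m * f m * π m) * (π m - π (m + 1)) := by
      calc (π m - π (m + 1)) * f m * (π m - π (m + 1))
          = ((π m - π (m + 1)) * π m) * f m * (π m * (π m - π (m + 1))) := by
            rw [hqp, hpq]
        _ = (π m - π (m + 1)) * (π m * f m * π m) * (π m - π (m + 1)) := by
            noncomm_ring
    constructor
    · exact conj_nonneg_self hqsa hf0
    · have hcucm : π m * f m * π m ≤ l ^ 2 • π m :=
        (ContinuousLinearMap.le_def _ _).mpr (hcuc m hm)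
      have h1 := conj_le_conj_self hqsa hcucm
      rw [mul_smul_comm, hqp, smul_mul_assoc, hqq] at h1
      rwa [← hrw] at h1
  -- Split the sum
  have hsplit : ∑ j ∈ Finset.Icc (n + 1) k, (π (j - 1) - π j) * f j * (π (j - 1) - π j) =
      (∑ j ∈ Finset.Icc (n + 1) k,
        (π (j - 1) - π j) * (f j - f (j - 1)) * (π (j - 1) - π j)) +
      ∑ j ∈ Finset.Icc (n + 1) k, (π (j - 1) - π j) * f (j - 1) * (π (j - 1) - π j) := by
    rw [← Finset.sum_add_distrib]
    refine Finset.sum_congr rfl fun j hj => ?_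
    noncomm_ring
  rw [hsplit]
  have hn1 := hsum _ hS1
  have hn2 := hsum _ hS2
  calc ‖π k * f k * π k +
        ((∑ j ∈ Finset.Icc (n + 1) k,
          (π (j - 1) - π j) * (f j - f (j - 1)) * (π (j - 1) - π j)) +
        ∑ j ∈ Finset.Icc (n + 1) k, (π (j - 1) - π j) * f (j - 1) * (π (j - 1) - π j))‖ ≤
      ‖π k * f k * π k‖ +
        (‖∑ j ∈ Finset.Icc (n + 1) k,
            (π (j - 1) - π j) * (f j - f (j - 1)) * (π (j - 1) - π j)‖ +
          ‖∑ j ∈ Finset.Icc (n + 1) k, (π (j - 1) - π j) * f (j - 1) * (π (j - 1) - π j)‖) :=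
        (norm_add_le _ _).trans (add_le_add le_rfl (norm_add_le _ _))
    _ ≤ l ^ 2 + (l ^ 2 + l ^ 2) := add_le_add hAnorm (add_le_add hn1 hn2)
    _ = 3 * l ^ 2 := by ring
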